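/- Let n ≥ 1 and let a_1, …, a_n be positive integers with a_1 > 1. If n is odd, then F_n = N[𝓛_1, …, 𝓛_n]; if n is even, then F_n = C_n^{−1} · N[𝓛_1, …, 𝓛_n]. -/

import Mathlib

open MvPolynomial Finset

/-- The ambient field `K = ℚ(y_1, y_2, …)` (only `y_1,…,y_d` are used). -/
abbrev Kf : Type := FractionRing (MvPolynomial ℕ ℚ)

/-- The variable `y_j`, viewed in the fraction field. -/
noncomputable def y (j : ℕ) : Kf := algebraMap (MvPolynomial ℕ ℚ) Kf (X j)

/-- Partial sums `ℓ_i = a_1 + ⋯ + a_i`, with `ℓ_0 = 0`. -/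
def ell (a : ℕ → ℕ) (i : ℕ) : ℕ := ∑ s ∈ Finset.Icc 1 i, a s

/-- `φ_i`. -/
noncomputable def phi (a : ℕ → ℕ) (i : ℕ) : Kf :=
  if Odd i then
    ∑ k ∈ Finset.Icc (ell a (i-1)) (ell a i - 1), ∏ j ∈ Finset.Icc (ell a (i-1) + 1) k, y j
  else
    ∑ k ∈ Finset.Icc (ell a (i-1) + 1) (ell a i), ∏ j ∈ Finset.Icc k (ell a i - 1), y j

/-- `C_i`. -/
noncomputable def Cc (a : ℕ → ℕ) (i : ℕ) : Kf :=
  if Odd i then ∏ j ∈ Finset.Icc 1 (ell a (i-1)), y j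
  else ∏ j ∈ Finset.Icc 1 (ell a i - 1), (y j)⁻¹

/-- `𝓛_i = φ_i C_i`. -/
noncomputable def Lr (a : ℕ → ℕ) (i : ℕ) : Kf := phi a i * Cc a i

/-- The continuant `N[b_1,…,b_m]`. -/
def contN {R : Type*} [CommSemiring R] (b : ℕ → R) : ℕ → R
  | 0 => 1
  | 1 => b 1
  | (m+2) => b (m+2) * contN b (m+1) + contN b m

/-- The F-polynomials `F_m = F(𝒢[a_1,…,a_m])`. -/
noncomputable def F (a : ℕ → ℕ) : ℕ → Kf
  | 0 => 1
  | 1 => phi a 1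
  | 2 => phi a 1 * phi a 2 + ∏ j ∈ Finset.Icc 1 (ell a 2 - 1), y j
  | (m+3) =>
    if Odd (m+3) then
      y (ell a (m+2)) * phi a (m+3) * F a (m+2) + F a (m+1)
    else
      phi a (m+3) * F a (m+2) + (∏ j ∈ Finset.Icc (ell a (m+1)) (ell a (m+3) - 1), y j) * F a (m+1)

lemma y_ne_zero (j : ℕ) : y j ≠ 0 := by
  have hinj : Function.Injective (algebraMap (MvPolynomial ℕ ℚ) Kf) :=
    IsFractionRing.injective _ _
  simpa [y, map_ne_zero_iff _ hinj] using (MvPolynomial.X_ne_zero (R := ℚ) (n := j))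

lemma prod_y_ne_zero (s : Finset ℕ) : (∏ j ∈ s, y j) ≠ 0 :=
  Finset.prod_ne_zero_iff.mpr fun j _ => y_ne_zero j

lemma lemA (L : ℕ) (hL : 1 ≤ L) :
    (∏ j ∈ Finset.Icc 1 L, y j) * ∏ j ∈ Finset.Icc 1 (L-1), (y j)⁻¹ = y L := by
  obtain ⟨K, rfl⟩ : ∃ K, L = K + 1 := ⟨L - 1, by omega⟩
  rw [Finset.prod_Icc_succ_top (by omega), Finset.prod_inv_distrib]
  have : K + 1 - 1 = K := rfl
  rw [this]
  field_simp [prod_y_ne_zero]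

lemma lemB (A B : ℕ) (hA : 1 ≤ A) (hAB : A ≤ B) :
    (∏ j ∈ Finset.Icc 1 (B-1), (y j)⁻¹) * ∏ j ∈ Finset.Icc A (B-1), y j
      = ∏ j ∈ Finset.Icc 1 (A-1), (y j)⁻¹ := by
  have h1 : Finset.Icc 1 (B-1) = Finset.Ioc 0 (B-1) := by
    rw [← Finset.Icc_add_one_left_eq_Ioc]; rfl
  have h2 : Finset.Icc A (B-1) = Finset.Ioc (A-1) (B-1) := by
    rw [← Finset.Icc_add_one_left_eq_Ioc]; congr 1; omega
  have h3 : Finset.Icc 1 (A-1) = Finset.Ioc 0 (A-1) := by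
    rw [← Finset.Icc_add_one_left_eq_Ioc]; rfl
  rw [h1, h2, h3]
  rw [← Finset.prod_Ioc_consecutive (fun j => (y j)⁻¹) (Nat.zero_le (A-1)) (by omega : A-1 ≤ B-1)]
  rw [mul_assoc]
  have h4 : (∏ i ∈ Finset.Ioc (A-1) (B-1), (y i)⁻¹) * ∏ j ∈ Finset.Ioc (A-1) (B-1), y j = 1 := by
    rw [Finset.prod_inv_distrib, inv_mul_cancel₀ (prod_y_ne_zero _)]
  rw [h4, mul_one]

/-- **Main theorem** (Rabideau): for `n ≥ 1` and positive integers `a_1,…,a_n` with `a_1 > 1`,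
if `n` is odd then `F_n = N[𝓛_1,…,𝓛_n]`, and if `n` is even then
`F_n = C_n⁻¹ ⬝ N[𝓛_1,…,𝓛_n]`. -/
theorem F_polynomial_continued_fraction_formula
    (n : ℕ) (hn : 1 ≤ n) (a : ℕ → ℕ)
    (hpos : ∀ i, 1 ≤ i → i ≤ n → 0 < a i) (ha1 : 1 < a 1) :
    (Odd n → F a n = contN (Lr a) n) ∧
    (Even n → F a n = (Cc a n)⁻¹ * contN (Lr a) n) := by
  have ha1' : 0 < a 1 := hpos 1 le_rfl hn
  have hell1 : ∀ i, 1 ≤ i → 1 ≤ ell a i := by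
    intro i hi
    calc 1 ≤ a 1 := ha1'
    _ ≤ ∑ s ∈ Finset.Icc 1 i, a s :=
        Finset.single_le_sum (fun s _ => Nat.zero_le _) (by simp [hi])
  have hellmono : ∀ i j, i ≤ j → ell a i ≤ ell a j := by
    intro i j hij
    exact Finset.sum_le_sum_of_subset (Finset.Icc_subset_Icc_right hij)
  have key : ∀ m, 1 ≤ m → m ≤ n →
      (Odd m → contN (Lr a) m = F a m) ∧ (Even m → contN (Lr a) m = Cc a m * F a m) := by
    intro m
    induction m using Nat.strong_induction_on with
    | _ m ih =>
      rcases m with _ | _ | _ | k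
      · intro h; exact absurd h (by omega)
      · intro _ _
        refine ⟨fun _ => ?_, fun h => absurd h (by decide)⟩
        have hC1 : Cc a 1 = 1 := by simp [Cc, ell]
        show Lr a 1 = F a 1
        rw [Lr, hC1, mul_one]
        rfl
      · intro _ _
        refine ⟨fun h => absurd h (by decide), fun _ => ?_⟩
        have hC1 : Cc a 1 = 1 := by simp [Cc, ell]
        have hC2 : Cc a 2 = ∏ j ∈ Finset.Icc 1 (ell a 2 - 1), (y j)⁻¹ := by
          simp [Cc]
        have hone : Cc a 2 * ∏ j ∈ Finset.Icc 1 (ell a 2 - 1), y j = 1 := by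
          rw [hC2, Finset.prod_inv_distrib, inv_mul_cancel₀ (prod_y_ne_zero _)]
        show Lr a 2 * Lr a 1 + 1 = Cc a 2 * F a 2
        rw [show F a 2 = phi a 1 * phi a 2 + ∏ j ∈ Finset.Icc 1 (ell a 2 - 1), y j from rfl,
          mul_add, hone, Lr, Lr, hC1]
        ring
      · intro _ hmn
        have ih2 := ih (k+2) (by omega) (by omega) (by omega)
        have ih1 := ih (k+1) (by omega) (by omega) (by omega)
        have e : contN (Lr a) (k+3) = Lr a (k+3) * contN (Lr a) (k+2) + contN (Lr a) (k+1) := rfl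
        rcases Nat.even_or_odd k with hk | hk
        · -- k even, k+3 odd
          have h3 : Odd (k+3) := by rw [Nat.odd_iff]; rw [Nat.even_iff] at hk; omega
          have h2 : Even (k+2) := by rw [Nat.even_iff] at hk ⊢; omega
          have h1 : Odd (k+1) := by rw [Nat.odd_iff]; rw [Nat.even_iff] at hk; omega
          refine ⟨fun _ => ?_, fun h => absurd h3 (Nat.not_odd_iff_even.mpr h)⟩
          rw [e, ih2.2 h2, ih1.1 h1]
          have hF : F a (k+3) = y (ell a (k+2)) * phi a (k+3) * F a (k+2) + F a (k+1) := by
            rw [F, if_pos h3]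
          rw [hF, Lr]
          have hCC : Cc a (k+3) * Cc a (k+2) = y (ell a (k+2)) := by
            simp only [Cc, if_pos h3, if_neg (Nat.not_odd_iff_even.mpr h2)]
            exact lemA (ell a (k+2)) (hell1 (k+2) (by omega))
          linear_combination (phi a (k+3) * F a (k+2)) * hCC
        · -- k odd, k+3 even
          have h3 : ¬ Odd (k+3) := by rw [Nat.odd_iff] at hk ⊢; omega
          have h3' : Even (k+3) := Nat.not_odd_iff_even.mp h3
          have h2 : Odd (k+2) := by rw [Nat.odd_iff] at hk ⊢; omega
          have h1 : Even (k+1) := by rw [Nat.odd_iff] at hk; rw [Nat.even_iff]; omega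
          refine ⟨fun h => absurd h h3, fun _ => ?_⟩
          rw [e, ih2.1 h2, ih1.2 h1]
          have hF : F a (k+3) = phi a (k+3) * F a (k+2) +
              (∏ j ∈ Finset.Icc (ell a (k+1)) (ell a (k+3) - 1), y j) * F a (k+1) := by
            rw [F, if_neg h3]
          rw [hF, Lr]
          have hCC : Cc a (k+3) * ∏ j ∈ Finset.Icc (ell a (k+1)) (ell a (k+3) - 1), y j
              = Cc a (k+1) := by
            simp only [Cc, if_neg h3, if_neg (Nat.not_odd_iff_even.mpr h1)]
            exact lemB (ell a (k+1)) (ell a (k+3)) (hell1 (k+1) (by omega))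
              (hellmono (k+1) (k+3) (by omega))
          linear_combination (F a (k+1)) * hCC.symm
  obtain ⟨ko, ke⟩ := key n hn le_rfl
  refine ⟨fun h => (ko h).symm, fun h => ?_⟩
  rw [ke h]
  have hC : Cc a n ≠ 0 := by
    simp only [Cc, if_neg (Nat.not_odd_iff_even.mpr h)]
    exact Finset.prod_ne_zero_iff.mpr fun j _ => inv_ne_zero (y_ne_zero j)
  rw [← mul_assoc, inv_mul_cancel₀ hC, one_mul]
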